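/- Let R be a set of requests on a bidirected tree T rooted at a vertex z, with R^-, R^+, R^∨ the sets of converging, diverging and unimodal requests of R, and let I ⊆ R be a set of pairwise non-interfering requests. Then either I consists of exactly two unimodal requests, or |I ∩ (R^+ ∪ R^∨)| ≤ 1, or |I ∩ (R^- ∪ R^∨)| ≤ 1. -/

import Mathlib

open SimpleGraph

/-- A request in a bidirected tree `T`: a directed path of length at least 1,
encoded as a path (walk without vertex repetition) in the underlying tree. -/
structure Request {V : Type*} (T : SimpleGraph V) where
  s : V
  t : V
  toWalk : T.Walk s t
  isPath : toWalk.IsPath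
  one_le_length : 1 ≤ toWalk.length

namespace Request

variable {V : Type*} {T : SimpleGraph V}

/-- The second vertex `s_r⁺` of a request. -/
def sPlus (r : Request T) : V := r.toWalk.getVert 1

/-- The penultimate vertex `t_r⁻` of a request. -/
def tMinus (r : Request T) : V := r.toWalk.getVert (r.toWalk.length - 1)

end Request

variable {V : Type*}

/-- `r` interferes on `r'` if the unique path from `s_r` to `t_{r'}` in the tree `T`
has first arc the emission arc of `r` and last arc the reception arc of `r'`. -/
def InterferesOn (T : SimpleGraph V) (r r' : Request T) : Prop :=
  ∃ p : T.Walk r.s r'.t, p.IsPath ∧ 1 ≤ p.length ∧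
    p.getVert 1 = r.sPlus ∧ p.getVert (p.length - 1) = r'.tMinus

/-- Two requests interfere if one of them interferes on the other. -/
def Interfere (T : SimpleGraph V) (r r' : Request T) : Prop :=
  InterferesOn T r r' ∨ InterferesOn T r' r

/-- `x` is an ancestor of `y` in the tree `T` rooted at `z`:
`x` lies on the unique path from `z` to `y`. -/
def Ancestor (T : SimpleGraph V) (z x y : V) : Prop :=
  ∃ p : T.Walk z y, p.IsPath ∧ x ∈ p.support

/-- Two vertices are related if one is an ancestor of the other. -/
def Related (T : SimpleGraph V) (z x y : V) : Prop :=
  Ancestor T z x y ∨ Ancestor T z y x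

/-- A request is converging (w.r.t. root `z`) if all its arcs are directed towards `z`,
i.e. the head of every arc is an ancestor of its tail. -/
def Converging (T : SimpleGraph V) (z : V) (r : Request T) : Prop :=
  ∀ i < r.toWalk.length, Ancestor T z (r.toWalk.getVert (i+1)) (r.toWalk.getVert i)

/-- A request is diverging (w.r.t. root `z`) if all its arcs are directed away from `z`,
i.e. the tail of every arc is an ancestor of its head. -/
def Diverging (T : SimpleGraph V) (z : V) (r : Request T) : Prop :=
  ∀ i < r.toWalk.length, Ancestor T z (r.toWalk.getVert i) (r.toWalk.getVert (i+1))

/-- A request is unimodal (w.r.t. root `z`) if it is neither converging nor diverging. -/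
def Unimodal (T : SimpleGraph V) (z : V) (r : Request T) : Prop :=
  ¬ Converging T z r ∧ ¬ Diverging T z r

/-- `m` is the middle of the request `r` (w.r.t. root `z`): the vertex of `r`
closest to the root, i.e. the vertex of `r` which is an ancestor of every vertex of `r`. -/
def IsMiddle (T : SimpleGraph V) (z : V) (r : Request T) (m : V) : Prop :=
  m ∈ r.toWalk.support ∧ ∀ y ∈ r.toWalk.support, Ancestor T z m y

/-- The interference graph of a family of requests: two (indices of) requests are
adjacent iff they are distinct and the requests interfere. -/
def interferenceGraph (T : SimpleGraph V) {ι : Type*} (f : ι → Request T) :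
    SimpleGraph ι where
  Adj i j := i ≠ j ∧ Interfere T (f i) (f j)
  symm := by
    constructor
    intro i j h
    exact ⟨h.1.symm, h.2.symm⟩
  loopless := by
    constructor
    intro i h
    exact h.1 rfl

/-- The interference graph of a set of requests. -/
def interGraph (T : SimpleGraph V) (R : Set (Request T)) : SimpleGraph ↥R :=
  interferenceGraph T (fun r => (r : Request T))

/-- The pair `(a, b)` is an arc joining two consecutive vertices of the
bidirected path corresponding to the walk `p` (in either direction). -/
def ArcOn (T : SimpleGraph V) {u v : V} (p : T.Walk u v) (a b : V) : Prop :=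
  ∃ j < p.length, (p.getVert j = a ∧ p.getVert (j+1) = b) ∨
    (p.getVert j = b ∧ p.getVert (j+1) = a)

/-- The request `r` shares an arc with the bidirected path corresponding to
the walk `p`. -/
def SharesArc (T : SimpleGraph V) {u v : V} (p : T.Walk u v) (r : Request T) : Prop :=
  ∃ i < r.toWalk.length, ArcOn T p (r.toWalk.getVert i) (r.toWalk.getVert (i+1))

/-- A leaf of a tree: a vertex with at most one neighbour. -/
def IsLeaf (T : SimpleGraph V) (y : V) : Prop :=
  {w | T.Adj y w}.Subsingleton

/-- A comparability graph: there is a partial order on the vertices such that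
two distinct vertices are adjacent iff they are comparable. -/
def IsComparabilityGraph {α : Type*} (G : SimpleGraph α) : Prop :=
  ∃ le : α → α → Prop, IsPartialOrder α le ∧ ∀ a b, G.Adj a b ↔ a ≠ b ∧ (le a b ∨ le b a)

/-- A cobipartite graph: the vertex set can be partitioned into two cliques. -/
def IsCobipartite {α : Type*} (G : SimpleGraph α) : Prop :=
  ∃ A : Set α, G.IsClique A ∧ G.IsClique Aᶜ


section TreeAux
open SimpleGraph Walk
variable {V : Type*} {T : SimpleGraph V} {z : V}

noncomputable def thePath (hT : T.IsTree) (u v : V) : T.Walk u v :=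
  haveI := Classical.decEq V; ((hT.isConnected.preconnected u v).some).toPath.1

lemma thePath_isPath (hT : T.IsTree) (u v : V) : (thePath hT u v).IsPath := by
  unfold thePath; exact Subtype.property _

lemma walk_eq_of_isPath (hT : T.IsAcyclic) {u v : V} {p q : T.Walk u v}
    (hp : p.IsPath) (hq : q.IsPath) : p = q :=
  congrArg Subtype.val (hT.path_unique ⟨p, hp⟩ ⟨q, hq⟩)

lemma eq_thePath (hT : T.IsTree) {u v : V} {p : T.Walk u v} (hp : p.IsPath) :
    p = thePath hT u v :=
  walk_eq_of_isPath hT.IsAcyclic hp (thePath_isPath hT u v)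

variable {z : V}

lemma anc_iff (hT : T.IsTree) {x y : V} : Ancestor T z x y ↔ x ∈ (thePath hT z y).support := by
  constructor
  · rintro ⟨p, hp, hx⟩; rwa [eq_thePath hT hp] at hx
  · intro h; exact ⟨_, thePath_isPath hT z y, h⟩

lemma anc_refl (hT : T.IsTree) (x : V) : Ancestor T z x x :=
  ⟨thePath hT z x, thePath_isPath hT z x, end_mem_support _⟩

lemma anc_trans (hT : T.IsTree) {x y w : V} (h1 : Ancestor T z x y) (h2 : Ancestor T z y w) :
    Ancestor T z x w := by
  classical
  obtain ⟨p, hp, hx⟩ := h1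
  obtain ⟨q, hq, hy⟩ := h2
  refine ⟨q, hq, ?_⟩
  have he : q.takeUntil y hy = p :=
    walk_eq_of_isPath hT.IsAcyclic (hq.takeUntil hy) hp
  exact q.support_takeUntil_subset hy (he ▸ hx)

lemma anc_antisymm (hT : T.IsTree) {x y : V} (h1 : Ancestor T z x y) (h2 : Ancestor T z y x) :
    x = y := by
  classical
  obtain ⟨p, hp, hx⟩ := h1
  -- takeUntil x of p is the path z → x
  have htu : (p.takeUntil x hx).IsPath := hp.takeUntil hx
  have hy' : y ∈ (p.takeUntil x hx).support := by
    obtain ⟨q, hq, hyq⟩ := h2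
    rwa [walk_eq_of_isPath hT.IsAcyclic hq htu] at hyq
  have hnd : ((p.takeUntil x hx).append (p.dropUntil x hx)).support.Nodup := by
    rw [take_spec]; exact hp.2
  rw [support_append, List.nodup_append] at hnd
  have hyd : y ∈ (p.dropUntil x hx).support := end_mem_support _
  rw [support_eq_cons] at hyd
  rcases List.mem_cons.mp hyd with h | h
  · exact h.symm
  · exact absurd rfl (hnd.2.2 y hy' y h)

lemma related_symm' {x y : V} (h : Ancestor T z x y ∨ Ancestor T z y x) :
    Ancestor T z y x ∨ Ancestor T z x y := h.symm

-- ancestors of a common vertex are related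
lemma anc_chain (hT : T.IsTree) {x y v : V} (hx : Ancestor T z x v) (hy : Ancestor T z y v) :
    Ancestor T z x y ∨ Ancestor T z y x := by
  classical
  rw [anc_iff hT] at hx hy
  set p := thePath hT z v with hpdef
  have hp : p.IsPath := thePath_isPath hT z v
  -- split p at x
  by_cases hyt : y ∈ (p.takeUntil x hx).support
  · exact Or.inr ⟨p.takeUntil x hx, hp.takeUntil hx, hyt⟩
  · -- y is in the drop part
    have hyd : y ∈ (p.dropUntil x hx).support := by
      have := p.take_spec hx
      have hy2 : y ∈ ((p.takeUntil x hx).append (p.dropUntil x hx)).support := by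
        rw [this]; exact hy
      rcases (mem_support_append_iff _ _).mp hy2 with h | h
      · exact absurd h hyt
      · exact h
    -- build path z → y through x
    set q := (p.dropUntil x hx).takeUntil y hyd with hqdef
    have hqp : q.IsPath := (hp.dropUntil hx).takeUntil hyd
    have hnd : ((p.takeUntil x hx).append (p.dropUntil x hx)).support.Nodup := by
      rw [take_spec]; exact hp.2
    rw [support_append, List.nodup_append] at hnd
    have hsub : q.support.tail ⊆ (p.dropUntil x hx).support.tail := by
      intro w hw
      have hw1 : w ∈ q.support := List.mem_of_mem_tail hw
      have hw2 : w ∈ (p.dropUntil x hx).support :=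
        (p.dropUntil x hx).support_takeUntil_subset hyd hw1
      rw [support_eq_cons] at hw2
      rcases List.mem_cons.mp hw2 with h | h
      · exfalso
        subst h
        have := hqp.2
        rw [support_eq_cons] at this
        exact (List.nodup_cons.mp this).1 hw
      · exact h
    have happ : ((p.takeUntil x hx).append q).IsPath := by
      rw [SimpleGraph.Walk.isPath_def, support_append, List.nodup_append]
      refine ⟨(hp.takeUntil hx).2, hqp.2.sublist (List.tail_sublist _), ?_⟩
      intro w hw1 w' hw2
      exact hnd.2.2 w hw1 w' (hsub hw2)
    refine Or.inl ⟨(p.takeUntil x hx).append q, happ, ?_⟩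
    rw [mem_support_append_iff]
    exact Or.inl (end_mem_support _)

-- the path to a vertex via its parent
lemma parent_concat (hT : T.IsTree) {u v : V} (h : T.Adj u v) (hanc : Ancestor T z u v) :
    thePath hT z v = (thePath hT z u).concat h := by
  have hnv : v ∉ (thePath hT z u).support := by
    intro hv
    have : v = u := anc_antisymm hT ⟨_, thePath_isPath hT z u, hv⟩ hanc
    exact h.ne this.symm
  have hcp : ((thePath hT z u).concat h).IsPath := by
    rw [SimpleGraph.Walk.isPath_def, support_concat,
      List.nodup_append]
    refine ⟨(thePath_isPath hT z u).2, List.nodup_singleton v, ?_⟩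
    intro w hw1 w' hw2 heq
    rw [List.mem_singleton] at hw2
    rw [heq, hw2] at hw1
    exact hnv hw1
  exact (eq_thePath hT hcp).symm

lemma parent_eq (hT : T.IsTree) {u v w : V} (huv : T.Adj u v) (hu : Ancestor T z u v)
    (hwv : T.Adj w v) (hw : Ancestor T z w v) : u = w := by
  have e1 := parent_concat hT huv hu
  have e2 := parent_concat hT hwv hw
  exact (Walk.concat_inj (e1.symm.trans e2)).1

lemma child_le (hT : T.IsTree) {u c c' w : V} (huc : T.Adj u c) (hanc : Ancestor T z u c)
    (hcw : Ancestor T z c w) (huc' : T.Adj u c') (hanc' : Ancestor T z u c')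
    (hc'w : Ancestor T z c' w) (hcc' : Ancestor T z c c') : c = c' := by
  have := parent_concat hT huc' hanc'
  have hcsup : c ∈ ((thePath hT z u).concat huc').support := by
    rw [← this]; exact (anc_iff hT).mp hcc'
  rw [support_concat, List.mem_append] at hcsup
  rcases hcsup with h | h
  · exfalso
    have : c = u := anc_antisymm hT ⟨_, thePath_isPath hT z u, h⟩ hanc
    exact huc.ne this.symm
  · exact List.mem_singleton.mp h

lemma child_eq (hT : T.IsTree) {u c c' w : V} (huc : T.Adj u c) (hanc : Ancestor T z u c)
    (hcw : Ancestor T z c w) (huc' : T.Adj u c') (hanc' : Ancestor T z u c')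
    (hc'w : Ancestor T z c' w) : c = c' := by
  rcases anc_chain hT hcw hc'w with h | h
  · exact child_le hT huc hanc hcw huc' hanc' hc'w h
  · exact (child_le hT huc' hanc' hc'w huc hanc hcw h).symm

lemma adj_related (hT : T.IsTree) {u v : V} (h : T.Adj u v) :
    Ancestor T z u v ∨ Ancestor T z v u := by
  by_cases hm : u ∈ (thePath hT z v).support
  · exact Or.inl ⟨_, thePath_isPath hT z v, hm⟩
  · right
    refine ⟨(thePath hT z v).concat h.symm, ?_, ?_⟩
    · rw [SimpleGraph.Walk.isPath_def, support_concat,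
        List.nodup_append]
      exact ⟨(thePath_isPath hT z v).2, List.nodup_singleton u,
        fun w hw1 w' hw2 heq => by rw [List.mem_singleton] at hw2; rw [heq, hw2] at hw1; exact hm hw1⟩
    · rw [support_concat, List.mem_append]
      exact Or.inl (end_mem_support _)

lemma getVert_injOn' : ∀ {a b : V} (p : T.Walk a b), p.IsPath →
    ∀ i j, i ≤ p.length → j ≤ p.length → p.getVert i = p.getVert j → i = j := by
  intro a b p
  induction p with
  | nil => intro _ i j hi hj _; simp only [Walk.length_nil, Nat.le_zero] at hi hj; omega
  | @cons u w b h q ih =>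
    intro hp i j hi hj heq
    have hq : q.IsPath := ((Walk.cons_isPath_iff h q).mp hp).1
    have hu : u ∉ q.support := ((Walk.cons_isPath_iff h q).mp hp).2
    match i, j with
    | 0, 0 => rfl
    | 0, j + 1 =>
      exfalso
      rw [Walk.getVert_zero, Walk.getVert_cons_succ] at heq
      exact hu (Walk.mem_support_iff_exists_getVert.mpr
        ⟨j, heq.symm, by simp only [Walk.length_cons] at hj; omega⟩)
    | i + 1, 0 =>
      exfalso
      rw [Walk.getVert_zero, Walk.getVert_cons_succ] at heq
      exact hu (Walk.mem_support_iff_exists_getVert.mpr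
        ⟨i, heq, by simp only [Walk.length_cons] at hi; omega⟩)
    | i + 1, j + 1 =>
      rw [Walk.getVert_cons_succ, Walk.getVert_cons_succ] at heq
      simp only [Walk.length_cons] at hi hj
      exact congrArg Nat.succ (ih hq i j (by omega) (by omega) heq)

-- every arc of a walk is up or down
lemma arc_up_or_down (hT : T.IsTree) {a b : V} (p : T.Walk a b) {i : ℕ} (hi : i < p.length) :
    Ancestor T z (p.getVert (i + 1)) (p.getVert i) ∨
      Ancestor T z (p.getVert i) (p.getVert (i + 1)) :=
  (adj_related hT (p.adj_getVert_succ hi)).symm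

lemma down_succ (hT : T.IsTree) {a b : V} {p : T.Walk a b} (hp : p.IsPath) {i : ℕ}
    (h1 : i + 1 < p.length)
    (hd : Ancestor T z (p.getVert i) (p.getVert (i + 1))) :
    Ancestor T z (p.getVert (i + 1)) (p.getVert (i + 2)) := by
  rcases arc_up_or_down hT p h1 with hup | hdn
  · exfalso
    have heq : p.getVert i = p.getVert (i + 2) :=
      parent_eq hT (p.adj_getVert_succ (by omega)) hd
        (p.adj_getVert_succ h1).symm hup
    have := getVert_injOn' p hp i (i + 2) (by omega) (by omega) heq
    omega
  · exact hdn

lemma down_ge (hT : T.IsTree) {a b : V} {p : T.Walk a b} (hp : p.IsPath) {i j : ℕ}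
    (hij : i ≤ j) (hj : j < p.length)
    (hd : Ancestor T z (p.getVert i) (p.getVert (i + 1))) :
    Ancestor T z (p.getVert j) (p.getVert (j + 1)) := by
  induction j with
  | zero => have : i = 0 := by omega
            subst this; exact hd
  | succ n ihn =>
    rcases Nat.lt_or_ge i (n + 1) with h | h
    · have hdn := ihn (by omega) (by omega)
      exact down_succ hT hp hj hdn
    · have : i = n + 1 := by omega
      subst this; exact hd

lemma all_up_anc (hT : T.IsTree) {a b : V} {p : T.Walk a b}
    (hall : ∀ k, k < p.length → Ancestor T z (p.getVert (k + 1)) (p.getVert k))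
    {i j : ℕ} (hij : i ≤ j) (hj : j ≤ p.length) :
    Ancestor T z (p.getVert j) (p.getVert i) := by
  induction j with
  | zero => have : i = 0 := by omega
            subst this; exact anc_refl hT _
  | succ n ihn =>
    rcases Nat.lt_or_ge i (n + 1) with h | h
    · exact anc_trans hT (hall n (by omega)) (ihn (by omega) (by omega))
    · have : i = n + 1 := by omega
      subst this; exact anc_refl hT _

lemma all_down_anc (hT : T.IsTree) {a b : V} {p : T.Walk a b}
    (hall : ∀ k, k < p.length → Ancestor T z (p.getVert k) (p.getVert (k + 1)))
    {i j : ℕ} (hij : i ≤ j) (hj : j ≤ p.length) :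
    Ancestor T z (p.getVert i) (p.getVert j) := by
  induction j with
  | zero => have : i = 0 := by omega
            subst this; exact anc_refl hT _
  | succ n ihn =>
    rcases Nat.lt_or_ge i (n + 1) with h | h
    · exact anc_trans hT (ihn (by omega) (by omega)) (hall n (by omega))
    · have : i = n + 1 := by omega
      subst this; exact anc_refl hT _

lemma edge_cross (hT : T.IsTree) {u w w' : V} (hww' : T.Adj w w')
    (hu : Ancestor T z u w') (hnw : ¬ Ancestor T z u w) : u = w' := by
  by_contra hne
  rcases adj_related hT hww' with h1 | h2
  · -- w is the parent of w'
    have := parent_concat hT hww' h1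
    have husup : u ∈ ((thePath hT z w).concat hww').support := by
      rw [← this]; exact (anc_iff hT).mp hu
    rw [support_concat, List.mem_append] at husup
    rcases husup with h | h
    · exact hnw ⟨_, thePath_isPath hT z w, h⟩
    · exact hne (List.mem_singleton.mp h)
  · exact hnw (anc_trans hT hu h2)

lemma cross (hT : T.IsTree) {u c : V} :
    ∀ {w : V} (q : T.Walk w c), ¬ Ancestor T z u w → Ancestor T z u c → u ∈ q.support := by
  intro w q
  induction q with
  | nil => intro hnw hc; exact absurd hc hnw
  | @cons a a' b hadj q' ih =>
    intro hnw hc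
    by_cases hmid : Ancestor T z u a'
    · have : u = a' := edge_cross hT hadj hmid hnw
      subst this
      exact List.mem_cons.mpr (Or.inr (start_mem_support _))
    · exact List.mem_cons.mpr (Or.inr (ih hmid hc))

/-- If a path starts with an up arc, its start is not an ancestor of its end. -/
lemma first_up_not_anc (hT : T.IsTree) {a b : V} {p : T.Walk a b} (hp : p.IsPath)
    (hl : 1 ≤ p.length) (hup : Ancestor T z (p.getVert 1) a) : ¬ Ancestor T z a b := by
  intro hab
  cases p with
  | nil => simp at hl
  | @cons _ w _ hadj q =>
    rw [Walk.getVert_cons_succ, Walk.getVert_zero] at hup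
    have hnaw : ¬ Ancestor T z a w := by
      intro h
      exact hadj.ne (anc_antisymm hT h hup)
    have hmem : a ∈ q.support := cross hT q hnaw hab
    exact ((Walk.cons_isPath_iff hadj q).mp hp).2 hmem

/-- If a path ends with a down arc, its end is not an ancestor of its start. -/
lemma last_down_not_anc (hT : T.IsTree) {a b : V} {p : T.Walk a b} (hp : p.IsPath)
    (hl : 1 ≤ p.length) (hdn : Ancestor T z (p.getVert (p.length - 1)) b) :
    ¬ Ancestor T z b a := by
  have hrev : Ancestor T z (p.reverse.getVert 1) b := by
    rwa [Walk.getVert_reverse]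
  exact first_up_not_anc hT hp.reverse (by rwa [Walk.length_reverse]) hrev

end TreeAux

section Aux2
open SimpleGraph Walk
variable {V : Type*} {T : SimpleGraph V} {z : V}

lemma Request.adj_s_sPlus (r : Request T) : T.Adj r.s r.sPlus := by
  have h := r.toWalk.adj_getVert_succ (Nat.lt_of_lt_of_le Nat.zero_lt_one r.one_le_length)
  rwa [Walk.getVert_zero] at h

lemma Request.adj_tMinus_t (r : Request T) : T.Adj r.tMinus r.t := by
  have hlt : r.toWalk.length - 1 < r.toWalk.length := by
    have := r.one_le_length; omega
  have h := r.toWalk.adj_getVert_succ hlt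
  have he : r.toWalk.length - 1 + 1 = r.toWalk.length := by
    have := r.one_le_length; omega
  rw [he, Walk.getVert_length] at h
  exact h

lemma conv_emUp (hT : T.IsTree) {r : Request T} (hc : Converging T z r) :
    Ancestor T z r.sPlus r.s := by
  have h := hc 0 (Nat.lt_of_lt_of_le Nat.zero_lt_one r.one_le_length)
  rwa [Walk.getVert_zero] at h

lemma conv_tMinus_anc_s (hT : T.IsTree) {r : Request T} (hc : Converging T z r) :
    Ancestor T z r.tMinus r.s := by
  have h := all_up_anc hT (p := r.toWalk) hc (i := 0) (j := r.toWalk.length - 1)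
    (Nat.zero_le _) (Nat.sub_le _ _)
  rwa [Walk.getVert_zero] at h

lemma conv_t_anc_tMinus (hT : T.IsTree) {r : Request T} (hc : Converging T z r) :
    Ancestor T z r.t r.tMinus := by
  have hlt : r.toWalk.length - 1 < r.toWalk.length := by have := r.one_le_length; omega
  have h := hc _ hlt
  have he : r.toWalk.length - 1 + 1 = r.toWalk.length := by have := r.one_le_length; omega
  rw [he, Walk.getVert_length] at h
  exact h

lemma div_s_anc_sPlus (hT : T.IsTree) {r : Request T} (hd : Diverging T z r) :
    Ancestor T z r.s r.sPlus := by
  have h := hd 0 (Nat.lt_of_lt_of_le Nat.zero_lt_one r.one_le_length)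
  rwa [Walk.getVert_zero] at h

lemma div_recDown (hT : T.IsTree) {r : Request T} (hd : Diverging T z r) :
    Ancestor T z r.tMinus r.t := by
  have hlt : r.toWalk.length - 1 < r.toWalk.length := by have := r.one_le_length; omega
  have h := hd _ hlt
  have he : r.toWalk.length - 1 + 1 = r.toWalk.length := by have := r.one_le_length; omega
  rw [he, Walk.getVert_length] at h
  exact h

lemma div_sPlus_anc_t (hT : T.IsTree) {r : Request T} (hd : Diverging T z r) :
    Ancestor T z r.sPlus r.t := by
  have h := all_down_anc hT (p := r.toWalk) hd (i := 1) r.one_le_length (le_refl _)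
  rwa [Walk.getVert_length] at h

lemma uni_struct (hT : T.IsTree) {r : Request T} (hu : Unimodal T z r) :
    Ancestor T z r.sPlus r.s ∧ Ancestor T z r.tMinus r.t ∧ ¬ Related T z r.s r.t := by
  obtain ⟨hnc, hnd⟩ := hu
  rw [Converging] at hnc
  rw [Diverging] at hnd
  push_neg at hnc hnd
  obtain ⟨i, hi, hniup⟩ := hnc
  obtain ⟨j, hj, hnjdn⟩ := hnd
  have hidown : Ancestor T z (r.toWalk.getVert i) (r.toWalk.getVert (i + 1)) := by
    rcases arc_up_or_down hT r.toWalk hi with h | h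
    · exact absurd h hniup
    · exact h
  have hjup : Ancestor T z (r.toWalk.getVert (j + 1)) (r.toWalk.getVert j) := by
    rcases arc_up_or_down hT r.toWalk hj with h | h
    · exact h
    · exact absurd h hnjdn
  -- the first arc is up
  have h0up : Ancestor T z (r.toWalk.getVert 1) (r.toWalk.getVert 0) := by
    rcases arc_up_or_down hT r.toWalk
        (Nat.lt_of_lt_of_le Nat.zero_lt_one r.one_le_length) with h | h
    · exact h
    · exfalso
      have hjd := down_ge hT r.isPath (Nat.zero_le j) hj h
      have heq := anc_antisymm hT hjd hjup
      exact (r.toWalk.adj_getVert_succ hj).ne heq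
  -- the last arc is down
  have hlast : Ancestor T z (r.toWalk.getVert (r.toWalk.length - 1))
      (r.toWalk.getVert (r.toWalk.length - 1 + 1)) :=
    down_ge hT r.isPath (by omega) (by have := r.one_le_length; omega) hidown
  have he : r.toWalk.length - 1 + 1 = r.toWalk.length := by have := r.one_le_length; omega
  refine ⟨?_, ?_, ?_⟩
  · rwa [Walk.getVert_zero] at h0up
  · rw [he, Walk.getVert_length] at hlast; exact hlast
  · rintro (h | h)
    · refine first_up_not_anc hT r.isPath r.one_le_length ?_ h
      rwa [Walk.getVert_zero] at h0up
    · refine last_down_not_anc hT r.isPath r.one_le_length ?_ h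
      rw [he, Walk.getVert_length] at hlast; exact hlast

lemma not_conv_div (hT : T.IsTree) {r : Request T} (hc : Converging T z r)
    (hd : Diverging T z r) : False := by
  have h0 : (0:ℕ) < r.toWalk.length := Nat.lt_of_lt_of_le Nat.zero_lt_one r.one_le_length
  exact (r.toWalk.adj_getVert_succ h0).ne (anc_antisymm hT (hd 0 h0) (hc 0 h0))
end Aux2



section Inter
open SimpleGraph Walk
variable {V : Type*} {T : SimpleGraph V} {z : V}

lemma interferesOn_of_not_related (hT : T.IsTree) {r r' : Request T}
    (hem : Ancestor T z r.sPlus r.s) (hrd : Ancestor T z r'.tMinus r'.t)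
    (h : ¬ Related T z r.s r'.t) : InterferesOn T r r' := by
  have hne : r.s ≠ r'.t := fun e => h (e ▸ Or.inl (anc_refl hT _))
  set p := thePath hT r.s r'.t with hpdef
  have hp : p.IsPath := thePath_isPath hT _ _
  have hlen : 1 ≤ p.length := by
    rcases Nat.eq_zero_or_pos p.length with h0 | h0
    · exact absurd (Walk.eq_of_length_eq_zero h0) hne
    · exact h0
  have h0lt : 0 < p.length := by omega
  have hlt : p.length - 1 < p.length := by omega
  have he1 : p.length - 1 + 1 = p.length := by omega
  have hadj1 : T.Adj (p.getVert 1) r.s := by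
    have := p.adj_getVert_succ h0lt
    rw [Walk.getVert_zero] at this
    exact this.symm
  have hadjL : T.Adj (p.getVert (p.length - 1)) r'.t := by
    have := p.adj_getVert_succ hlt
    rwa [he1, Walk.getVert_length] at this
  -- first arc is up
  have hup0 : Ancestor T z (p.getVert 1) r.s := by
    rcases arc_up_or_down hT p (i := 0) h0lt with hu | hd
    · rwa [Walk.getVert_zero] at hu
    · exfalso
      have hall : ∀ k, k < p.length → Ancestor T z (p.getVert k) (p.getVert (k + 1)) :=
        fun k hk => down_ge hT hp (i := 0) (j := k) (Nat.zero_le k) hk hd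
      have := all_down_anc hT hall (i := 0) (j := p.length) (Nat.zero_le _) (le_refl _)
      rw [Walk.getVert_zero, Walk.getVert_length] at this
      exact h (Or.inl this)
  -- last arc is down
  have hdnL : Ancestor T z (p.getVert (p.length - 1)) r'.t := by
    rcases arc_up_or_down hT p (i := p.length - 1) hlt with hu | hd
    · exfalso
      rw [he1, Walk.getVert_length] at hu
      have hall : ∀ k, k < p.length → Ancestor T z (p.getVert (k + 1)) (p.getVert k) := by
        intro k hk
        rcases arc_up_or_down hT p (i := k) hk with h1 | h1
        · exact h1
        · exfalso
          have hl := down_ge hT hp (i := k) (j := p.length - 1) (by omega) hlt h1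
          rw [he1, Walk.getVert_length] at hl
          exact hadjL.ne (anc_antisymm hT hl hu)
      have := all_up_anc hT hall (i := 0) (j := p.length) (Nat.zero_le _) (le_refl _)
      rw [Walk.getVert_zero, Walk.getVert_length] at this
      exact h (Or.inr this)
    · rwa [he1, Walk.getVert_length] at hd
  refine ⟨p, hp, hlen, ?_, ?_⟩
  · exact parent_eq hT hadj1 hup0 r.adj_s_sPlus.symm hem
  · exact parent_eq hT hadjL hdnL r'.adj_tMinus_t hrd

lemma interferesOn_up_conv (hT : T.IsTree) {r r' : Request T}
    (hem : Ancestor T z r.sPlus r.s) (hc : Converging T z r')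
    (h : Ancestor T z r'.tMinus r.s) : InterferesOn T r r' := by
  have h1 : Ancestor T z r'.t r'.tMinus := conv_t_anc_tMinus hT hc
  have hts : Ancestor T z r'.t r.s := anc_trans hT h1 h
  have hne : r.s ≠ r'.t := by
    intro e
    have : r'.t = r'.tMinus := anc_antisymm hT h1 (e ▸ h)
    exact r'.adj_tMinus_t.ne this.symm
  set p := thePath hT r.s r'.t with hpdef
  have hp : p.IsPath := thePath_isPath hT _ _
  have hlen : 1 ≤ p.length := by
    rcases Nat.eq_zero_or_pos p.length with h0 | h0
    · exact absurd (Walk.eq_of_length_eq_zero h0) hne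
    · exact h0
  have h0lt : 0 < p.length := by omega
  have hlt : p.length - 1 < p.length := by omega
  have he1 : p.length - 1 + 1 = p.length := by omega
  -- all arcs are up
  have hall : ∀ k, k < p.length → Ancestor T z (p.getVert (k + 1)) (p.getVert k) := by
    intro k hk
    rcases arc_up_or_down hT p (i := k) hk with h' | h'
    · exact h'
    · exfalso
      have hl := down_ge hT hp (i := k) (j := p.length - 1) (by omega) hlt h'
      rw [he1, Walk.getVert_length] at hl
      exact last_down_not_anc hT hp hlen hl hts
  refine ⟨p, hp, hlen, ?_, ?_⟩
  · have h0 := hall 0 h0lt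
    rw [Walk.getVert_zero] at h0
    norm_num at h0
    have hadj1 : T.Adj (p.getVert 1) r.s := by
      have := p.adj_getVert_succ h0lt
      rw [Walk.getVert_zero] at this
      exact this.symm
    exact parent_eq hT hadj1 h0 r.adj_s_sPlus.symm hem
  · have hpen := hall (p.length - 1) hlt
    rw [he1, Walk.getVert_length] at hpen
    have hpenS : Ancestor T z (p.getVert (p.length - 1)) r.s := by
      have := all_up_anc hT hall (i := 0) (j := p.length - 1) (Nat.zero_le _) (by omega)
      rwa [Walk.getVert_zero] at this
    have hadjpen : T.Adj r'.t (p.getVert (p.length - 1)) := by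
      have := p.adj_getVert_succ hlt
      rw [he1, Walk.getVert_length] at this
      exact this.symm
    exact child_eq hT hadjpen hpen hpenS r'.adj_tMinus_t.symm h1 h

lemma interferesOn_div_down (hT : T.IsTree) {r r' : Request T}
    (hd : Diverging T z r) (hrd : Ancestor T z r'.tMinus r'.t)
    (h : Ancestor T z r.sPlus r'.t) : InterferesOn T r r' := by
  have h1 : Ancestor T z r.s r.sPlus := div_s_anc_sPlus hT hd
  have hst : Ancestor T z r.s r'.t := anc_trans hT h1 h
  have hne : r.s ≠ r'.t := by
    intro e
    have : r.s = r.sPlus := anc_antisymm hT h1 (e ▸ h)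
    exact r.adj_s_sPlus.ne this
  set p := thePath hT r.s r'.t with hpdef
  have hp : p.IsPath := thePath_isPath hT _ _
  have hlen : 1 ≤ p.length := by
    rcases Nat.eq_zero_or_pos p.length with h0 | h0
    · exact absurd (Walk.eq_of_length_eq_zero h0) hne
    · exact h0
  have h0lt : 0 < p.length := by omega
  have hlt : p.length - 1 < p.length := by omega
  have he1 : p.length - 1 + 1 = p.length := by omega
  -- first arc is down
  have h0dn : Ancestor T z (p.getVert 0) (p.getVert 1) := by
    rcases arc_up_or_down hT p (i := 0) h0lt with h' | h'
    · exfalso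
      rw [Walk.getVert_zero] at h'
      norm_num at h'
      exact first_up_not_anc hT hp hlen h' hst
    · exact h'
  have hall : ∀ k, k < p.length → Ancestor T z (p.getVert k) (p.getVert (k + 1)) :=
    fun k hk => down_ge hT hp (i := 0) (j := k) (Nat.zero_le k) hk h0dn
  refine ⟨p, hp, hlen, ?_, ?_⟩
  · have h0 := h0dn
    rw [Walk.getVert_zero] at h0
    have h1T : Ancestor T z (p.getVert 1) r'.t := by
      have := all_down_anc hT hall (i := 1) (j := p.length) hlen (le_refl _)
      rwa [Walk.getVert_length] at this
    have hadj1 : T.Adj r.s (p.getVert 1) := by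
      have := p.adj_getVert_succ h0lt
      rwa [Walk.getVert_zero] at this
    exact child_eq hT hadj1 h0 h1T r.adj_s_sPlus h1 h
  · have hpen := hall (p.length - 1) hlt
    rw [he1, Walk.getVert_length] at hpen
    have hadjL : T.Adj (p.getVert (p.length - 1)) r'.t := by
      have := p.adj_getVert_succ hlt
      rwa [he1, Walk.getVert_length] at this
    exact parent_eq hT hadjL hpen r'.adj_tMinus_t hrd
end Inter

/-- Lemma 6: if `I` is a set of pairwise non-interfering requests of `R`, then
either `I` consists of exactly two unimodal requests, or `I ∩ (R⁺ ∪ R^∨)` has at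
most one element, or `I ∩ (R⁻ ∪ R^∨)` has at most one element. -/
theorem independent_structure {V : Type*} (T : SimpleGraph V) (hT : T.IsTree)
    (z : V) (R I : Set (Request T)) (hIR : I ⊆ R)
    (hI : ∀ r ∈ I, ∀ r' ∈ I, r ≠ r' → ¬ Interfere T r r') :
    (∃ r r' : Request T, r ≠ r' ∧ I = {r, r'} ∧ Unimodal T z r ∧ Unimodal T z r') ∨
    (I ∩ ({r ∈ R | Diverging T z r} ∪ {r ∈ R | Unimodal T z r})).Subsingleton ∨
    (I ∩ ({r ∈ R | Converging T z r} ∪ {r ∈ R | Unimodal T z r})).Subsingleton  := by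
  classical
  by_cases h2 : (I ∩ ({r ∈ R | Diverging T z r} ∪ {r ∈ R | Unimodal T z r})).Subsingleton
  · exact Or.inr (Or.inl h2)
  by_cases h3 : (I ∩ ({r ∈ R | Converging T z r} ∪ {r ∈ R | Unimodal T z r})).Subsingleton
  · exact Or.inr (Or.inr h3)
  left
  obtain ⟨a, ha, b, hb, hab⟩ := Set.not_subsingleton_iff.mp h2
  obtain ⟨c, hc, d, hd, hcd⟩ := Set.not_subsingleton_iff.mp h3
  have haI : a ∈ I := ha.1
  have hbI : b ∈ I := hb.1
  have hcI : c ∈ I := hc.1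
  have hdI : d ∈ I := hd.1
  have hFa : Diverging T z a ∨ Unimodal T z a := by
    rcases ha.2 with h | h
    · exact Or.inl h.2
    · exact Or.inr h.2
  have hFb : Diverging T z b ∨ Unimodal T z b := by
    rcases hb.2 with h | h
    · exact Or.inl h.2
    · exact Or.inr h.2
  have hEc : Converging T z c ∨ Unimodal T z c := by
    rcases hc.2 with h | h
    · exact Or.inl h.2
    · exact Or.inr h.2
  have hEd : Converging T z d ∨ Unimodal T z d := by
    rcases hd.2 with h | h
    · exact Or.inl h.2
    · exact Or.inr h.2
  -- basic consequences of the types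
  have hEem : ∀ {x : Request T}, (Converging T z x ∨ Unimodal T z x) →
      Ancestor T z x.sPlus x.s :=
    fun h => h.elim (conv_emUp hT) (fun hu => (uni_struct hT hu).1)
  have hFrd : ∀ {x : Request T}, (Diverging T z x ∨ Unimodal T z x) →
      Ancestor T z x.tMinus x.t :=
    fun h => h.elim (div_recDown hT) (fun hu => (uni_struct hT hu).2.1)
  -- the three interference constraints
  have hK1 : ∀ x ∈ I, ∀ y ∈ I, x ≠ y → Ancestor T z x.sPlus x.s →
      Ancestor T z y.tMinus y.t → Related T z x.s y.t := by
    intro x hx y hy hxy hex hry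
    by_contra hnr
    exact hI x hx y hy hxy (Or.inl (interferesOn_of_not_related hT hex hry hnr))
  have hK2 : ∀ x ∈ I, ∀ y ∈ I, x ≠ y → Ancestor T z x.sPlus x.s →
      Converging T z y → ¬ Ancestor T z y.tMinus x.s := by
    intro x hx y hy hxy hex hcy hanc
    exact hI x hx y hy hxy (Or.inl (interferesOn_up_conv hT hex hcy hanc))
  have hK3 : ∀ x ∈ I, ∀ y ∈ I, x ≠ y → Diverging T z x →
      Ancestor T z y.tMinus y.t → ¬ Ancestor T z x.sPlus y.t := by
    intro x hx y hy hxy hdx hry hanc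
    exact hI x hx y hy hxy (Or.inl (interferesOn_div_down hT hdx hry hanc))
  -- two sources of "emission-up" requests are unrelated
  have hGh : ∀ x ∈ I, ∀ y ∈ I, x ≠ y → (Converging T z x ∨ Unimodal T z x) →
      (Converging T z y ∨ Unimodal T z y) → Ancestor T z x.s y.s → False := by
    intro x hx y hy hxy hex hey hss
    rcases hex with hcx | hux
    · exact hK2 y hy x hx hxy.symm (hEem hey) hcx
        (anc_trans hT (conv_tMinus_anc_s hT hcx) hss)
    · obtain ⟨hxe, hxr, hxn⟩ := uni_struct hT hux
      rcases hK1 y hy x hx hxy.symm (hEem hey) hxr with h | h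
      · exact hxn (Or.inl (anc_trans hT hss h))
      · exact hxn (anc_chain hT hss h)
  have hG : ∀ x ∈ I, ∀ y ∈ I, x ≠ y → (Converging T z x ∨ Unimodal T z x) →
      (Converging T z y ∨ Unimodal T z y) → ¬ Related T z x.s y.s := by
    intro x hx y hy hxy hex hey hrel
    rcases hrel with h | h
    · exact hGh x hx y hy hxy hex hey h
    · exact hGh y hy x hx hxy.symm hey hex h
  -- two targets of "reception-down" requests are unrelated
  have hG'h : ∀ x ∈ I, ∀ y ∈ I, x ≠ y → (Diverging T z x ∨ Unimodal T z x) →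
      (Diverging T z y ∨ Unimodal T z y) → Ancestor T z x.t y.t → False := by
    intro x hx y hy hxy hfx hfy htt
    rcases hfx with hdx | hux
    · exact hK3 x hx y hy hxy hdx (hFrd hfy)
        (anc_trans hT (div_sPlus_anc_t hT hdx) htt)
    · obtain ⟨hxe, hxr, hxn⟩ := uni_struct hT hux
      rcases hK1 x hx y hy hxy hxe (hFrd hfy) with h | h
      · exact hxn (anc_chain hT h htt)
      · exact hxn (Or.inr (anc_trans hT htt h))
  have hG' : ∀ x ∈ I, ∀ y ∈ I, x ≠ y → (Diverging T z x ∨ Unimodal T z x) →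
      (Diverging T z y ∨ Unimodal T z y) → ¬ Related T z x.t y.t := by
    intro x hx y hy hxy hfx hfy hrel
    rcases hrel with h | h
    · exact hG'h x hx y hy hxy hfx hfy h
    · exact hG'h y hy x hx hxy.symm hfy hfx h
  -- M2 : an emission-up request outside a pair {a', b'} whose first member is of both kinds
  have hM2 : ∀ a' b' c' : Request T, a' ∈ I → b' ∈ I → c' ∈ I → a' ≠ b' → c' ≠ a' →
      c' ≠ b' → (Diverging T z a' ∨ Unimodal T z a') →
      (Diverging T z b' ∨ Unimodal T z b') →
      (Converging T z a' ∨ Unimodal T z a') →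
      (Converging T z c' ∨ Unimodal T z c') → False := by
    intro a' b' c' ha' hb' hc' hab' hca' hcb' hFa' hFb' hEa' hEc'
    have Rca := hK1 c' hc' a' ha' hca' (hEem hEc') (hFrd hFa')
    have Rcb := hK1 c' hc' b' hb' hcb' (hEem hEc') (hFrd hFb')
    have Rab := hK1 a' ha' b' hb' hab' (hEem hEa') (hFrd hFb')
    have G'ab := hG' a' ha' b' hb' hab' hFa' hFb'
    have Gac := hG a' ha' c' hc' (fun e => hca' e.symm) hEa' hEc'
    rcases Rab with h1 | h1
    · rcases Rcb with h2 | h2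
      · exact Gac (anc_chain hT h1 h2)
      · exact Gac (Or.inl (anc_trans hT h1 h2))
    · rcases Rcb with h2 | h2
      · exact Gac (Or.inr (anc_trans hT h2 h1))
      · rcases Rca with h3 | h3
        · exact G'ab (Or.inr (anc_trans hT h2 h3))
        · exact G'ab (anc_chain hT h3 h2)
  -- M1 : two emission-up requests both outside the pair {a', b'}
  have hM1 : ∀ a' b' c' d' : Request T, a' ∈ I → b' ∈ I → c' ∈ I → d' ∈ I → a' ≠ b' →
      c' ≠ d' → c' ≠ a' → c' ≠ b' → d' ≠ a' → d' ≠ b' →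
      (Diverging T z a' ∨ Unimodal T z a') → (Diverging T z b' ∨ Unimodal T z b') →
      (Converging T z c' ∨ Unimodal T z c') → (Converging T z d' ∨ Unimodal T z d') →
      False := by
    intro a' b' c' d' ha' hb' hc' hd' hab' hcd' hca' hcb' hda' hdb' hFa' hFb' hEc' hEd'
    have Rca := hK1 c' hc' a' ha' hca' (hEem hEc') (hFrd hFa')
    have Rcb := hK1 c' hc' b' hb' hcb' (hEem hEc') (hFrd hFb')
    have Rda := hK1 d' hd' a' ha' hda' (hEem hEd') (hFrd hFa')
    have Rdb := hK1 d' hd' b' hb' hdb' (hEem hEd') (hFrd hFb')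
    have Gcd := hG c' hc' d' hd' hcd' hEc' hEd'
    have G'ab := hG' a' ha' b' hb' hab' hFa' hFb'
    rcases Rca with h1 | h1
    · rcases Rda with h2 | h2
      · exact Gcd (anc_chain hT h1 h2)
      · exact Gcd (Or.inl (anc_trans hT h1 h2))
    · rcases Rcb with h2 | h2
      · rcases Rdb with h3 | h3
        · exact Gcd (anc_chain hT h2 h3)
        · exact Gcd (Or.inl (anc_trans hT h2 h3))
      · exact G'ab (anc_chain hT h1 h2)
  -- M3 : a reception-down request outside a pair of unimodal-like requests
  have hM3 : ∀ a' b' e' : Request T, a' ∈ I → b' ∈ I → e' ∈ I → a' ≠ b' → e' ≠ a' →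
      e' ≠ b' → (Converging T z a' ∨ Unimodal T z a') →
      (Converging T z b' ∨ Unimodal T z b') →
      (Diverging T z b' ∨ Unimodal T z b') →
      (Diverging T z e' ∨ Unimodal T z e') → False := by
    intro a' b' e' ha' hb' he' hab' hea' heb' hEa' hEb' hFb' hFe'
    have Rae := hK1 a' ha' e' he' (fun h => hea' h.symm) (hEem hEa') (hFrd hFe')
    have Rbe := hK1 b' hb' e' he' (fun h => heb' h.symm) (hEem hEb') (hFrd hFe')
    have Gab := hG a' ha' b' hb' hab' hEa' hEb'
    have Rab := hK1 a' ha' b' hb' hab' (hEem hEa') (hFrd hFb')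
    have G'be := hG' b' hb' e' he' (fun h => heb' h.symm) hFb' hFe'
    rcases Rae with h1 | h1
    · rcases Rbe with h2 | h2
      · exact Gab (anc_chain hT h1 h2)
      · exact Gab (Or.inl (anc_trans hT h1 h2))
    · rcases Rbe with h2 | h2
      · exact Gab (Or.inr (anc_trans hT h2 h1))
      · rcases Rab with h3 | h3
        · exact G'be (Or.inr (anc_trans hT h1 h3))
        · exact G'be (anc_chain hT h3 h1)
  -- Step 1: c and d are both in {a, b}
  have hca_or : c = a ∨ c = b := by
    by_contra hc'
    push_neg at hc'
    by_cases hd1 : d = a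
    · exact hM2 a b c haI hbI hcI hab hc'.1 hc'.2 hFa hFb (hd1 ▸ hEd) hEc
    by_cases hd2 : d = b
    · exact hM2 b a c hbI haI hcI (Ne.symm hab) hc'.2 hc'.1 hFb hFa (hd2 ▸ hEd) hEc
    · exact hM1 a b c d haI hbI hcI hdI hab hcd hc'.1 hc'.2 hd1 hd2 hFa hFb hEc hEd
  have hda_or : d = a ∨ d = b := by
    by_contra hd'
    push_neg at hd'
    by_cases hc1 : c = a
    · exact hM2 a b d haI hbI hdI hab hd'.1 hd'.2 hFa hFb (hc1 ▸ hEc) hEd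
    by_cases hc2 : c = b
    · exact hM2 b a d hbI haI hdI (Ne.symm hab) hd'.2 hd'.1 hFb hFa (hc2 ▸ hEc) hEd
    · exact hM1 a b c d haI hbI hcI hdI hab hcd hc1 hc2 hd'.1 hd'.2 hFa hFb hEc hEd
  have hEab : (Converging T z a ∨ Unimodal T z a) ∧
      (Converging T z b ∨ Unimodal T z b) := by
    rcases hca_or with h1 | h1 <;> rcases hda_or with h2 | h2
    · exact absurd (h1.trans h2.symm) hcd
    · exact ⟨h1 ▸ hEc, h2 ▸ hEd⟩
    · exact ⟨h2 ▸ hEd, h1 ▸ hEc⟩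
    · exact absurd (h1.trans h2.symm) hcd
  have hUa : Unimodal T z a := by
    rcases hEab.1 with h | h
    · rcases hFa with h' | h'
      · exact (not_conv_div hT h h').elim
      · exact h'
    · exact h
  have hUb : Unimodal T z b := by
    rcases hEab.2 with h | h
    · rcases hFb with h' | h'
      · exact (not_conv_div hT h h').elim
      · exact h'
    · exact h
  -- Step 2: I = {a, b}
  have hIeq : I = {a, b} := by
    apply Set.Subset.antisymm
    · intro e he
      by_contra hne
      simp only [Set.mem_insert_iff, Set.mem_singleton_iff] at hne
      push_neg at hne
      obtain ⟨hea, heb⟩ := hne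
      by_cases hce : Converging T z e
      · exact hM2 a b e haI hbI he hab hea heb hFa hFb hEab.1 (Or.inl hce)
      by_cases hde : Diverging T z e
      · exact hM3 a b e haI hbI he hab hea heb hEab.1 hEab.2 hFb (Or.inl hde)
      · exact hM2 a b e haI hbI he hab hea heb hFa hFb hEab.1 (Or.inr ⟨hce, hde⟩)
    · intro e he
      simp only [Set.mem_insert_iff, Set.mem_singleton_iff] at he
      rcases he with rfl | rfl
      · exact haI
      · exact hbI
  exact ⟨a, b, hab, hIeq, hUa, hUb⟩
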